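/- Let X = (x₀,…,x_{d+1}) ∈ H^{d+2} with min(X) > 0, and define c_MT(X)² = (1/(d+2)) · diam(X)^{−d(d+1)} · Σ_{i=0}^{d+1} p_d sin_{x_i}(X)², c_alg(X) = p_d sin_{x₀}(X) / ∏_{1≤i<j≤d+1} ‖x_i − x_j‖, c_vol(X)² = M_{d+1}(X)² / diam(X)^{(d+1)(d+2)}, and c_min(X)² = min_i p_d sin_{x_i}(X)² / diam(X)^{d(d+1)}. Then: (a) c_alg(X)² ≥ c_MT(X)²; (b) if min(X) ≥ λ·diam(X) for some λ > 0, then c_MT(X)² ≥ λ^{d(d+1)} · c_alg(X)²; (c) c_min(X)² ≥ c_vol(X)²; (d) if min(X) ≥ λ·diam(X), then c_vol(X)² ≥ λ^{2(d+1)} · c_MT(X)². -/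

import Mathlib

open Metric Finset

noncomputable section

/-- n! times the n-volume of the simplex on y₀,…,y_n (Gram determinant form). -/
def simplexContent {H : Type*} [NormedAddCommGroup H] [InnerProductSpace ℝ H]
    (n : ℕ) (y : Fin (n + 1) → H) : ℝ :=
  Real.sqrt (Matrix.det (Matrix.of fun i j : Fin n =>
    (inner ℝ (y i.succ - y 0) (y j.succ - y 0) : ℝ)))

/-- The polar sine of X at the vertex X i. -/
def polarSin {H : Type*} [NormedAddCommGroup H] [InnerProductSpace ℝ H]
    {n : ℕ} (X : Fin (n + 2) → H) (i : Fin (n + 2)) : ℝ :=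
  simplexContent (n + 1) X / ∏ j ∈ Finset.univ.erase i, dist (X j) (X i)

/-- The smallest pairwise distance among the coordinates of X. -/
def tmin {H : Type*} [PseudoMetricSpace H] {n : ℕ} (X : Fin n → H) : ℝ :=
  sInf {r | ∃ i j, i ≠ j ∧ r = dist (X i) (X j)}

/-- The largest pairwise distance among the coordinates of X. -/
def tdiam {H : Type*} [PseudoMetricSpace H] {n : ℕ} (X : Fin n → H) : ℝ :=
  Metric.diam (Set.range X)

/-- c_MT(X)² = (1/(d+2))·diam(X)^{−d(d+1)}·Σᵢ p_d sin_{xᵢ}(X)². -/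
def cMTsq {H : Type*} [NormedAddCommGroup H] [InnerProductSpace ℝ H]
    (d : ℕ) (X : Fin (d + 2) → H) : ℝ :=
  (1 / (d + 2)) * (∑ i, polarSin X i ^ 2) / tdiam X ^ (d * (d + 1))

/-- c_alg(X) = p_d sin_{x₀}(X) / ∏_{1≤i<j≤d+1} ‖xᵢ − xⱼ‖. -/
def cAlg {H : Type*} [NormedAddCommGroup H] [InnerProductSpace ℝ H]
    (d : ℕ) (X : Fin (d + 2) → H) : ℝ :=
  polarSin X 0 /
    ∏ p ∈ Finset.univ.filter (fun p : Fin (d + 2) × Fin (d + 2) => 0 < p.1 ∧ p.1 < p.2),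
      dist (X p.1) (X p.2)

/-- c_vol(X)² = M_{d+1}(X)² / diam(X)^{(d+1)(d+2)}. -/
def cVolsq {H : Type*} [NormedAddCommGroup H] [InnerProductSpace ℝ H]
    (d : ℕ) (X : Fin (d + 2) → H) : ℝ :=
  simplexContent (d + 1) X ^ 2 / tdiam X ^ ((d + 1) * (d + 2))

/-- c_min(X)² = minᵢ p_d sin_{xᵢ}(X)² / diam(X)^{d(d+1)}. -/
def cMinsq {H : Type*} [NormedAddCommGroup H] [InnerProductSpace ℝ H]
    (d : ℕ) (X : Fin (d + 2) → H) : ℝ :=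
  (Finset.univ.inf' Finset.univ_nonempty fun i => polarSin X i ^ 2) / tdiam X ^ (d * (d + 1))

section Auxiliary

variable {H : Type*} [PseudoMetricSpace H]

private lemma aux_prod_sq_offDiag {m : ℕ} (X : Fin m → H) :
    (∏ p ∈ univ.filter (fun p : Fin m × Fin m => p.1 < p.2), dist (X p.1) (X p.2)) ^ 2
      = ∏ p ∈ (univ : Finset (Fin m)).offDiag, dist (X p.1) (X p.2) := by
  have hswap : (∏ p ∈ univ.filter (fun p : Fin m × Fin m => p.2 < p.1), dist (X p.1) (X p.2))
      = ∏ p ∈ univ.filter (fun p : Fin m × Fin m => p.1 < p.2), dist (X p.1) (X p.2) := by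
    apply Finset.prod_nbij' (fun p => Prod.swap p) (fun p => Prod.swap p) <;>
      simp [dist_comm]
  have hunion : (univ : Finset (Fin m)).offDiag =
      univ.filter (fun p : Fin m × Fin m => p.1 < p.2) ∪
      univ.filter (fun p : Fin m × Fin m => p.2 < p.1) := by
    ext p
    simp only [Finset.mem_offDiag, Finset.mem_union, Finset.mem_filter, Finset.mem_univ,
      true_and]
    exact ne_iff_lt_or_gt
  have hdisj : Disjoint (univ.filter (fun p : Fin m × Fin m => p.1 < p.2))
      (univ.filter (fun p : Fin m × Fin m => p.2 < p.1)) := by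
    simp only [Finset.disjoint_left, Finset.mem_filter]
    rintro p ⟨-, h1⟩ ⟨-, h2⟩
    exact absurd h2 (lt_asymm h1)
  rw [hunion, Finset.prod_union hdisj, hswap, sq]

private lemma aux_offDiag_split {m : ℕ} (X : Fin m → H) (i : Fin m) :
    ∏ p ∈ (univ : Finset (Fin m)).offDiag, dist (X p.1) (X p.2)
      = (∏ j ∈ univ.erase i, dist (X j) (X i)) ^ 2 *
        ∏ p ∈ ((univ.erase i : Finset (Fin m))).offDiag, dist (X p.1) (X p.2) := by
  classical
  rw [← Finset.prod_filter_mul_prod_filter_not ((univ : Finset (Fin m)).offDiag)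
    (fun p => p.1 = i),
    ← Finset.prod_filter_mul_prod_filter_not
      (((univ : Finset (Fin m)).offDiag).filter (fun p => ¬ p.1 = i)) (fun p => p.2 = i)]
  have e1 : ((univ : Finset (Fin m)).offDiag).filter (fun p => p.1 = i)
      = {i} ×ˢ univ.erase i := by
    ext p
    simp only [Finset.mem_filter, Finset.mem_offDiag, Finset.mem_product,
      Finset.mem_singleton, Finset.mem_erase, Finset.mem_univ, true_and, and_true]
    constructor
    · rintro ⟨h, rfl⟩; exact ⟨rfl, fun hh => h hh.symm⟩
    · rintro ⟨rfl, h⟩; exact ⟨fun hh => h hh.symm, rfl⟩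
  have e2 : (((univ : Finset (Fin m)).offDiag).filter (fun p => ¬ p.1 = i)).filter
        (fun p => p.2 = i)
      = (univ.erase i) ×ˢ {i} := by
    ext p
    simp only [Finset.mem_filter, Finset.mem_offDiag, Finset.mem_product,
      Finset.mem_singleton, Finset.mem_erase, Finset.mem_univ, true_and, and_true]
    constructor
    · rintro ⟨⟨-, h⟩, rfl⟩; exact ⟨h, rfl⟩
    · rintro ⟨h, rfl⟩; exact ⟨⟨fun hh => h hh, h⟩, rfl⟩
  have e3 : (((univ : Finset (Fin m)).offDiag).filter (fun p => ¬ p.1 = i)).filter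
        (fun p => ¬ p.2 = i)
      = (univ.erase i : Finset (Fin m)).offDiag := by
    ext p
    simp only [Finset.mem_filter, Finset.mem_offDiag, Finset.mem_erase, Finset.mem_univ,
      true_and, and_true]
    tauto
  have h1 : ∏ p ∈ ({i} ×ˢ univ.erase i : Finset (Fin m × Fin m)), dist (X p.1) (X p.2)
      = ∏ j ∈ univ.erase i, dist (X j) (X i) := by
    rw [Finset.singleton_product, Finset.prod_map]
    simp [dist_comm]
  have h2 : ∏ p ∈ ((univ.erase i) ×ˢ {i} : Finset (Fin m × Fin m)), dist (X p.1) (X p.2)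
      = ∏ j ∈ univ.erase i, dist (X j) (X i) := by
    rw [Finset.product_singleton, Finset.prod_map]
    simp
  rw [e1, e2, e3, h1, h2]
  ring

private lemma aux_prod_lt_split0 {d : ℕ} (X : Fin (d + 2) → H) :
    ∏ p ∈ univ.filter (fun p : Fin (d + 2) × Fin (d + 2) => p.1 < p.2), dist (X p.1) (X p.2)
      = (∏ j ∈ univ.erase (0 : Fin (d + 2)), dist (X j) (X 0)) *
        ∏ p ∈ univ.filter (fun p : Fin (d + 2) × Fin (d + 2) => 0 < p.1 ∧ p.1 < p.2),
          dist (X p.1) (X p.2) := by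
  classical
  rw [← Finset.prod_filter_mul_prod_filter_not
    (univ.filter (fun p : Fin (d + 2) × Fin (d + 2) => p.1 < p.2)) (fun p => p.1 = 0)]
  have e1 : (univ.filter (fun p : Fin (d + 2) × Fin (d + 2) => p.1 < p.2)).filter
        (fun p => p.1 = 0)
      = {(0 : Fin (d + 2))} ×ˢ univ.erase 0 := by
    ext p
    simp only [Finset.mem_filter, Finset.mem_univ, true_and, Finset.mem_product,
      Finset.mem_singleton, Finset.mem_erase, and_true]
    constructor
    · rintro ⟨h, h0⟩
      rw [h0] at h
      exact ⟨h0, Fin.pos_iff_ne_zero.mp h⟩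
    · rintro ⟨h0, h⟩
      refine ⟨?_, h0⟩
      rw [h0]
      exact Fin.pos_iff_ne_zero.mpr h
  have e2 : (univ.filter (fun p : Fin (d + 2) × Fin (d + 2) => p.1 < p.2)).filter
        (fun p => ¬ p.1 = 0)
      = univ.filter (fun p : Fin (d + 2) × Fin (d + 2) => 0 < p.1 ∧ p.1 < p.2) := by
    ext p
    simp only [Finset.mem_filter, Finset.mem_univ, true_and]
    constructor
    · rintro ⟨h, h0⟩
      exact ⟨Fin.pos_iff_ne_zero.mpr h0, h⟩
    · rintro ⟨h0, h⟩
      exact ⟨h, Fin.pos_iff_ne_zero.mp h0⟩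
  have h1 : ∏ p ∈ ({(0 : Fin (d + 2))} ×ˢ univ.erase 0 : Finset (Fin (d + 2) × Fin (d + 2))),
        dist (X p.1) (X p.2)
      = ∏ j ∈ univ.erase (0 : Fin (d + 2)), dist (X j) (X 0) := by
    rw [Finset.singleton_product, Finset.prod_map]
    simp [dist_comm]
  rw [e1, e2, h1]

end Auxiliary

/-- Comparison of the menagerie of curvatures: (a) c_alg² ≥ c_MT²; (b) if min(X) ≥ λ·diam(X)
then c_MT² ≥ λ^{d(d+1)}·c_alg²; (c) c_min² ≥ c_vol²; (d) if min(X) ≥ λ·diam(X) then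
c_vol² ≥ λ^{2(d+1)}·c_MT². -/
theorem curvature_comparisons {H : Type*} [NormedAddCommGroup H] [InnerProductSpace ℝ H]
    (d : ℕ) (hd : 1 ≤ d) (X : Fin (d + 2) → H) (hmin : 0 < tmin X) :
    (cMTsq d X ≤ cAlg d X ^ 2) ∧
    (∀ l : ℝ, 0 < l → l * tdiam X ≤ tmin X → l ^ (d * (d + 1)) * cAlg d X ^ 2 ≤ cMTsq d X) ∧
    (cVolsq d X ≤ cMinsq d X) ∧
    (∀ l : ℝ, 0 < l → l * tdiam X ≤ tmin X → l ^ (2 * (d + 1)) * cMTsq d X ≤ cVolsq d X) := by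
  classical
  set D := tdiam X with hDdef
  set M := simplexContent (d + 1) X with hMdef
  set Q : Fin (d + 2) → ℝ := fun i => ∏ j ∈ univ.erase i, dist (X j) (X i) with hQdef
  set TP : Fin (d + 2) → ℝ :=
    fun i => ∏ p ∈ ((univ.erase i : Finset (Fin (d + 2)))).offDiag, dist (X p.1) (X p.2)
    with hTPdef
  set A : ℝ := ∏ p ∈ (univ : Finset (Fin (d + 2))).offDiag, dist (X p.1) (X p.2) with hAdef
  set P : ℝ := ∏ p ∈ univ.filter (fun p : Fin (d + 2) × Fin (d + 2) => p.1 < p.2),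
    dist (X p.1) (X p.2) with hPdef
  -- basic distance bounds
  have hmin_le : ∀ i j : Fin (d + 2), i ≠ j → tmin X ≤ dist (X i) (X j) := by
    intro i j hij
    apply csInf_le
    · exact ⟨0, by rintro r ⟨i, j, -, rfl⟩; exact dist_nonneg⟩
    · exact ⟨i, j, hij, rfl⟩
  have hdist_pos : ∀ i j : Fin (d + 2), i ≠ j → 0 < dist (X i) (X j) :=
    fun i j hij => lt_of_lt_of_le hmin (hmin_le i j hij)
  have hdist_le : ∀ i j : Fin (d + 2), dist (X i) (X j) ≤ D := by
    intro i j
    exact Metric.dist_le_diam_of_mem ((Set.finite_range X).isBounded)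
      (Set.mem_range_self i) (Set.mem_range_self j)
  have h01 : (0 : Fin (d + 2)) ≠ 1 := by
    intro h
    simpa using congrArg Fin.val h
  have hD : 0 < D := lt_of_lt_of_le (hdist_pos 0 1 h01) (hdist_le 0 1)
  have hmD : tmin X ≤ D := le_trans (hmin_le 0 1 h01) (hdist_le 0 1)
  -- positivity of products
  have hQpos : ∀ i, 0 < Q i := by
    intro i
    exact Finset.prod_pos fun j hj => hdist_pos j i (Finset.mem_erase.mp hj).1
  have hTPpos : ∀ i, 0 < TP i := by
    intro i
    refine Finset.prod_pos fun p hp => hdist_pos p.1 p.2 ?_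
    exact (Finset.mem_offDiag.mp hp).2.2
  have hApos : 0 < A :=
    Finset.prod_pos fun p hp => hdist_pos p.1 p.2 (Finset.mem_offDiag.mp hp).2.2
  -- structural identities
  have f1 : P ^ 2 = A := aux_prod_sq_offDiag X
  have f2 : ∀ i, A = Q i ^ 2 * TP i := fun i => aux_offDiag_split X i
  have f3 : P = Q 0 * ∏ p ∈ univ.filter
      (fun p : Fin (d + 2) × Fin (d + 2) => 0 < p.1 ∧ p.1 < p.2), dist (X p.1) (X p.2) :=
    aux_prod_lt_split0 X
  have hPpos : 0 < P := by
    refine Finset.prod_pos fun p hp => hdist_pos p.1 p.2 ?_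
    exact ne_of_lt (Finset.mem_filter.mp hp).2
  have f4 : cAlg d X = M / P := by
    rw [cAlg, polarSin, div_div, ← hMdef, f3]
  have f5 : cAlg d X ^ 2 = M ^ 2 / A := by
    rw [f4, div_pow, f1]
  have f6 : ∀ i, polarSin X i ^ 2 = M ^ 2 / Q i ^ 2 := by
    intro i
    rw [polarSin, div_pow, ← hMdef]
  have f7 : ∀ i, polarSin X i ^ 2 = M ^ 2 / A * TP i := by
    intro i
    rw [f6 i, f2 i]
    field_simp [(hQpos i).ne', (hTPpos i).ne']
  -- cardinalities
  have hcardE : ∀ i : Fin (d + 2), (univ.erase i : Finset (Fin (d + 2))).card = d + 1 := by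
    intro i
    rw [Finset.card_erase_of_mem (Finset.mem_univ i), Finset.card_univ, Fintype.card_fin]
    omega
  have hcardT : ∀ i : Fin (d + 2),
      ((univ.erase i : Finset (Fin (d + 2)))).offDiag.card = d * (d + 1) := by
    intro i
    rw [Finset.offDiag_card, hcardE, Nat.succ_mul, Nat.add_sub_cancel]
  -- bounds on products
  have hTP_le : ∀ i, TP i ≤ D ^ (d * (d + 1)) := by
    intro i
    calc TP i ≤ ∏ _p ∈ ((univ.erase i : Finset (Fin (d + 2)))).offDiag, D :=
          Finset.prod_le_prod (fun p _ => dist_nonneg) (fun p _ => hdist_le p.1 p.2)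
      _ = D ^ (d * (d + 1)) := by rw [Finset.prod_const, hcardT]
  have hQ_le : ∀ i, Q i ≤ D ^ (d + 1) := by
    intro i
    calc Q i ≤ ∏ _j ∈ (univ.erase i : Finset (Fin (d + 2))), D :=
          Finset.prod_le_prod (fun j _ => dist_nonneg) (fun j _ => hdist_le j i)
      _ = D ^ (d + 1) := by rw [Finset.prod_const, hcardE]
  have hc : 0 ≤ M ^ 2 / A := div_nonneg (sq_nonneg M) hApos.le
  refine ⟨?_, ?_, ?_, ?_⟩
  · -- (a)
    rw [cMTsq, f5, div_le_iff₀ (pow_pos hD _)]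
    have hsum : (∑ i, polarSin X i ^ 2) ≤ (d + 2 : ℝ) * (M ^ 2 / A * D ^ (d * (d + 1))) := by
      calc (∑ i, polarSin X i ^ 2)
          ≤ ∑ _i : Fin (d + 2), M ^ 2 / A * D ^ (d * (d + 1)) := by
            refine Finset.sum_le_sum fun i _ => ?_
            rw [f7 i]
            exact mul_le_mul_of_nonneg_left (hTP_le i) hc
        _ = (d + 2 : ℝ) * (M ^ 2 / A * D ^ (d * (d + 1))) := by
            rw [Finset.sum_const, Finset.card_univ, Fintype.card_fin, nsmul_eq_mul]
            push_cast
            ring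
    have h2 : (0 : ℝ) < (d : ℝ) + 2 := by positivity
    calc (1 / ((d : ℝ) + 2)) * (∑ i, polarSin X i ^ 2)
        ≤ (1 / ((d : ℝ) + 2)) * ((d + 2 : ℝ) * (M ^ 2 / A * D ^ (d * (d + 1)))) := by
          gcongr
      _ = M ^ 2 / A * D ^ (d * (d + 1)) := by field_simp
  · -- (b)
    intro l hl hlD
    have hlD' : ∀ i j : Fin (d + 2), i ≠ j → l * D ≤ dist (X i) (X j) :=
      fun i j hij => le_trans hlD (hmin_le i j hij)
    have hlDpos : 0 < l * D := mul_pos hl hD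
    have hTP_ge : ∀ i, l ^ (d * (d + 1)) * D ^ (d * (d + 1)) ≤ TP i := by
      intro i
      rw [← mul_pow]
      calc (l * D) ^ (d * (d + 1))
          = ∏ _p ∈ ((univ.erase i : Finset (Fin (d + 2)))).offDiag, (l * D) := by
            rw [Finset.prod_const, hcardT]
        _ ≤ TP i := Finset.prod_le_prod (fun p _ => hlDpos.le)
            (fun p hp => hlD' p.1 p.2 (Finset.mem_offDiag.mp hp).2.2)
    rw [cMTsq, f5, le_div_iff₀ (pow_pos hD _)]
    have hsum : (d + 2 : ℝ) * (M ^ 2 / A * (l ^ (d * (d + 1)) * D ^ (d * (d + 1))))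
        ≤ ∑ i, polarSin X i ^ 2 := by
      calc (d + 2 : ℝ) * (M ^ 2 / A * (l ^ (d * (d + 1)) * D ^ (d * (d + 1))))
          = ∑ _i : Fin (d + 2), M ^ 2 / A * (l ^ (d * (d + 1)) * D ^ (d * (d + 1))) := by
            rw [Finset.sum_const, Finset.card_univ, Fintype.card_fin, nsmul_eq_mul]
            push_cast
            ring
        _ ≤ ∑ i, polarSin X i ^ 2 := by
            refine Finset.sum_le_sum fun i _ => ?_
            rw [f7 i]
            exact mul_le_mul_of_nonneg_left (hTP_ge i) hc
    have h2 : (0 : ℝ) < (d : ℝ) + 2 := by positivity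
    calc l ^ (d * (d + 1)) * (M ^ 2 / A) * D ^ (d * (d + 1))
        = (1 / ((d : ℝ) + 2)) *
            ((d + 2 : ℝ) * (M ^ 2 / A * (l ^ (d * (d + 1)) * D ^ (d * (d + 1))))) := by
          field_simp
      _ ≤ (1 / ((d : ℝ) + 2)) * (∑ i, polarSin X i ^ 2) := by
          gcongr
  · -- (c)
    rw [cVolsq, cMinsq, ← hMdef, ← hDdef,
      show (d + 1) * (d + 2) = 2 * (d + 1) + d * (d + 1) by ring, pow_add, ← div_div]
    have key : M ^ 2 / D ^ (2 * (d + 1))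
        ≤ univ.inf' Finset.univ_nonempty fun i => polarSin X i ^ 2 := by
      apply Finset.le_inf'
      intro i _
      rw [f6 i]
      have hQ2 : Q i ^ 2 ≤ D ^ (2 * (d + 1)) := by
        rw [show 2 * (d + 1) = (d + 1) * 2 by ring, pow_mul]
        exact pow_le_pow_left₀ (hQpos i).le (hQ_le i) 2
      exact div_le_div_of_nonneg_left (sq_nonneg M) (pow_pos (hQpos i) 2) hQ2
    gcongr
  · -- (d)
    intro l hl hlD
    have hlD' : ∀ i j : Fin (d + 2), i ≠ j → l * D ≤ dist (X i) (X j) :=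
      fun i j hij => le_trans hlD (hmin_le i j hij)
    have hlDpos : 0 < l * D := mul_pos hl hD
    have hQ_ge : ∀ i, (l * D) ^ (d + 1) ≤ Q i := by
      intro i
      calc (l * D) ^ (d + 1) = ∏ _j ∈ (univ.erase i : Finset (Fin (d + 2))), (l * D) := by
            rw [Finset.prod_const, hcardE]
        _ ≤ Q i := Finset.prod_le_prod (fun j _ => hlDpos.le)
            (fun j hj => hlD' j i (Finset.mem_erase.mp hj).1)
    have hterm : ∀ i, polarSin X i ^ 2
        ≤ M ^ 2 / (l ^ (2 * (d + 1)) * D ^ (2 * (d + 1))) := by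
      intro i
      rw [f6 i]
      have h1 : l ^ (2 * (d + 1)) * D ^ (2 * (d + 1)) ≤ Q i ^ 2 := by
        rw [← mul_pow, show 2 * (d + 1) = (d + 1) * 2 by ring, pow_mul]
        exact pow_le_pow_left₀ (pow_nonneg hlDpos.le _) (hQ_ge i) 2
      exact div_le_div_of_nonneg_left (sq_nonneg M) (by positivity) h1
    have hsum : (∑ i, polarSin X i ^ 2)
        ≤ (d + 2 : ℝ) * (M ^ 2 / (l ^ (2 * (d + 1)) * D ^ (2 * (d + 1)))) := by
      calc (∑ i, polarSin X i ^ 2)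
          ≤ ∑ _i : Fin (d + 2), M ^ 2 / (l ^ (2 * (d + 1)) * D ^ (2 * (d + 1))) :=
            Finset.sum_le_sum fun i _ => hterm i
        _ = (d + 2 : ℝ) * (M ^ 2 / (l ^ (2 * (d + 1)) * D ^ (2 * (d + 1)))) := by
            rw [Finset.sum_const, Finset.card_univ, Fintype.card_fin, nsmul_eq_mul]
            push_cast
            ring
    rw [cMTsq, cVolsq, ← hMdef, ← hDdef,
      show (d + 1) * (d + 2) = 2 * (d + 1) + d * (d + 1) by ring, pow_add]
    have h2 : (0 : ℝ) < (d : ℝ) + 2 := by positivity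
    calc l ^ (2 * (d + 1)) *
          ((1 / ((d : ℝ) + 2)) * (∑ i, polarSin X i ^ 2) / D ^ (d * (d + 1)))
        ≤ l ^ (2 * (d + 1)) *
            ((1 / ((d : ℝ) + 2)) *
              ((d + 2 : ℝ) * (M ^ 2 / (l ^ (2 * (d + 1)) * D ^ (2 * (d + 1))))) /
              D ^ (d * (d + 1))) := by
          gcongr
      _ = M ^ 2 / (D ^ (2 * (d + 1)) * D ^ (d * (d + 1))) := by
          field_simp
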